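/- Let G be an S_{1,1,2}-free (chair-free) simple graph and let t, u, v be three distinct vertices with t adjacent to u, u adjacent to v, and t not adjacent to v. Let W be the set of all vertices w with w adjacent to v, w ∉ {t,u}, w not adjacent to u, and w not adjacent to t. Then any two distinct vertices of W are adjacent (W is a clique). Moreover, if G additionally contains no clique on four vertices (K_4-free), then |W| ≤ 2. -/

import Mathlib

/-- The chair `S_{1,1,2}`: centre `0` adjacent to `1`, `2` and `3`, with the
extra edge `3-4`. -/
def chair : SimpleGraph (Fin 5) :=
  SimpleGraph.fromEdgeSet {s(0, 1), s(0, 2), s(0, 3), s(3, 4)}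

lemma chair_embed {V : Type*} (G : SimpleGraph V) (v w₁ w₂ u t : V)
    (h01 : G.Adj v w₁) (h02 : G.Adj v w₂) (h03 : G.Adj v u) (h34 : G.Adj u t)
    (n12 : ¬ G.Adj w₁ w₂) (n13 : ¬ G.Adj w₁ u) (n14 : ¬ G.Adj w₁ t)
    (n23 : ¬ G.Adj w₂ u) (n24 : ¬ G.Adj w₂ t) (n04 : ¬ G.Adj v t)
    (d12 : w₁ ≠ w₂) (d13 : w₁ ≠ u) (d14 : w₁ ≠ t) (d23 : w₂ ≠ u)
    (d24 : w₂ ≠ t) (d04 : v ≠ t) :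
    Nonempty (chair ↪g G) := by
  have d01 : v ≠ w₁ := G.ne_of_adj h01
  have d02 : v ≠ w₂ := G.ne_of_adj h02
  have d03 : v ≠ u := G.ne_of_adj h03
  have d34 : u ≠ t := G.ne_of_adj h34
  refine ⟨⟨⟨![v, w₁, w₂, u, t], ?_⟩, ?_⟩⟩
  · intro a b hab
    fin_cases a <;> fin_cases b <;> simp_all <;> first
      | rfl
      | (exact absurd hab.symm (by assumption))
      | (exact absurd hab (by assumption))
  · intro a b
    fin_cases a <;> fin_cases b <;>
      simp [chair, Sym2.eq, Sym2.rel_iff', G.adj_comm] <;>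
      first
        | (exact by assumption)
        | (exact fun h => absurd h (by assumption))
        | (exact G.adj_comm .. ▸ by assumption)
        | (exact fun h => absurd (G.adj_symm h) (by assumption))
        | skip
    all_goals exact h01.symm

theorem stmt_12 {V : Type*} [Fintype V] (G : SimpleGraph V)
    (hfree : ¬ Nonempty (chair ↪g G))
    (t u v : V) (htv : t ≠ v) (htu : G.Adj t u) (huv : G.Adj u v)
    (hntv : ¬ G.Adj t v) :
    ({w : V | G.Adj v w ∧ w ≠ t ∧ w ≠ u ∧ ¬ G.Adj w u ∧ ¬ G.Adj w t}.Pairwise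
        G.Adj) ∧
    (G.CliqueFree 4 →
      {w : V | G.Adj v w ∧ w ≠ t ∧ w ≠ u ∧ ¬ G.Adj w u ∧ ¬ G.Adj w t}.ncard ≤ 2) := by
  classical
  have hpair : {w : V | G.Adj v w ∧ w ≠ t ∧ w ≠ u ∧ ¬ G.Adj w u ∧ ¬ G.Adj w t}.Pairwise G.Adj := by
    intro w₁ hw₁ w₂ hw₂ hne
    by_contra hadj
    obtain ⟨a1, b1, c1, e1, f1⟩ := hw₁
    obtain ⟨a2, b2, c2, e2, f2⟩ := hw₂
    exact hfree (chair_embed G v w₁ w₂ u t a1 a2 (G.adj_symm huv) (G.adj_symm htu)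
      hadj e1 f1 e2 f2 (fun h => hntv (G.adj_symm h)) hne c1 b1 c2 b2 htv.symm)
  refine ⟨hpair, fun hK4 => ?_⟩
  by_contra hle
  push_neg at hle
  obtain ⟨s, hs, hcard⟩ := Set.exists_subset_card_eq (hle : 3 ≤ _)
  obtain ⟨a, b, c, hab, hac, hbc, rfl⟩ := Set.ncard_eq_three.mp hcard
  have ha := hs (by simp : a ∈ ({a,b,c} : Set V))
  have hb := hs (by simp : b ∈ ({a,b,c} : Set V))
  have hc := hs (by simp : c ∈ ({a,b,c} : Set V))
  have hvab := hpair ha hb hab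
  have hvac := hpair ha hc hac
  have hvbc := hpair hb hc hbc
  exact hK4 {v, a, b, c} (by
    refine ⟨?_, ?_⟩
    · intro x hx y hy hxy
      simp only [Finset.coe_insert, Set.mem_insert_iff, Finset.coe_singleton,
        Set.mem_singleton_iff] at hx hy
      rcases hx with rfl|rfl|rfl|rfl <;> rcases hy with rfl|rfl|rfl|rfl <;>
        first
          | exact absurd rfl hxy
          | exact ha.1 | exact hb.1 | exact hc.1
          | exact ha.1.symm | exact hb.1.symm | exact hc.1.symm
          | exact hvab | exact hvab.symm | exact hvac | exact hvac.symm
          | exact hvbc | exact hvbc.symm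
    · rw [Finset.card_insert_of_notMem (by
          simp only [Finset.mem_insert, Finset.mem_singleton]
          push_neg
          exact ⟨ha.1.ne, hb.1.ne, hc.1.ne⟩),
        Finset.card_insert_of_notMem (by simp [hab, hac]),
        Finset.card_insert_of_notMem (by simp [hbc]),
        Finset.card_singleton])
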